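/- Let G be a middle and right nuclear normal subgroup of a loop L and K a loop. Then L has a factor-free Schreier decomposition L(Θ,e) with respect to G (with K as the first factor) if and only if L contains a left transversal Σ of L/G which is a subloop of L isomorphic to K. -/
import Mathlib


universe u v

/-- A loop: a type with a multiplication all of whose left and right translations
are bijective, together with a two-sided identity element. -/
class MLoop (L : Type u) extends Mul L, One L where
  mul_left_bij : ∀ x : L, Function.Bijective fun y : L => x * y
  mul_right_bij : ∀ x : L, Function.Bijective fun y : L => y * x
  one_mul : ∀ x : L, 1 * x = x
  mul_one : ∀ x : L, x * 1 = x

instance (L : Type u) [MLoop L] : Nonempty L := ⟨1⟩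

/-- Left division `x \ y = λ_x⁻¹ y`. -/
noncomputable def MLoop.ldiv {L : Type u} [MLoop L] (x y : L) : L :=
  Function.invFun (fun z : L => x * z) y

/-- Right division `x / y = ρ_y⁻¹ x`. -/
noncomputable def MLoop.rdiv {L : Type u} [MLoop L] (x y : L) : L :=
  Function.invFun (fun z : L => z * y) x

/-- Middle inner mapping `T_x = ρ_x⁻¹ ∘ λ_x`, i.e. `T_x t` is the unique `z` with
`z * x = x * t`. -/
noncomputable def MLoop.midInner {L : Type u} [MLoop L] (x t : L) : L :=
  Function.invFun (fun z : L => z * x) (x * t)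

/-- The left nucleus of a multiplicative structure. -/
def leftNucleus (L : Type u) [Mul L] : Set L :=
  {u : L | ∀ x y : L, u * x * y = u * (x * y)}

/-- The right nucleus of a multiplicative structure. -/
def rightNucleus (L : Type u) [Mul L] : Set L :=
  {u : L | ∀ x y : L, x * y * u = x * (y * u)}

/-- The middle nucleus of a multiplicative structure. -/
def middleNucleus (L : Type u) [Mul L] : Set L :=
  {u : L | ∀ x y : L, x * u * y = x * (u * y)}

/-- A subset of a loop is a normal subloop if it is the kernel of a loop homomorphism. -/
def IsNormalSubloop {L : Type u} [MLoop L] (N : Set L) : Prop :=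
  ∃ (M : Type u) (i : MLoop M) (f : L → M),
    (∀ x y : L, f (x * y) = i.toMul.mul (f x) (f y)) ∧ N = {x : L | f x = i.toOne.one}

/-- The data `(Θ, f)` of a Schreier extension of the group `G` by the loop `K`. -/
structure SchreierData (K : Type u) (G : Type v) [MLoop K] [Group G] where
  Θ : K → G ≃* G
  f : K → K → G
  theta_one : Θ 1 = MulEquiv.refl G
  f_one_left : ∀ σ : K, f 1 σ = 1
  f_one_right : ∀ σ : K, f σ 1 = 1

/-- The multiplication of the Schreier loop `L(Θ,f)` on `K × G`:
`(τ,t)∘(σ,s) = (τσ, f(τ,σ)·Θ_σ(t)·s)`. -/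
def SchreierData.mul {K : Type u} {G : Type v} [MLoop K] [Group G]
    (D : SchreierData K G) (p q : K × G) : K × G :=
  (p.1 * q.1, D.f p.1 q.1 * D.Θ q.1 p.2 * q.2)


section Helpers

variable {L : Type u} [MLoop L]

theorem MLoop.mul_ldiv' (x y : L) : x * MLoop.ldiv x y = y :=
  Function.invFun_eq ((MLoop.mul_left_bij x).2 y)

theorem MLoop.rdiv_mul' (x y : L) : MLoop.rdiv x y * y = x :=
  Function.invFun_eq ((MLoop.mul_right_bij y).2 x)

theorem MLoop.left_cancel' {x a b : L} (h : x * a = x * b) : a = b :=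
  (MLoop.mul_left_bij x).1 h

theorem MLoop.right_cancel' {x a b : L} (h : a * x = b * x) : a = b :=
  (MLoop.mul_right_bij x).1 h

end Helpers

/-- a loop `L` has a factor-free Schreier decomposition `L(Θ,e)` with
respect to a middle and right nuclear normal subgroup `G`, with first factor the loop
`K`, iff `L` contains a left transversal `S` of `L/G` which is a subloop of `L`
isomorphic to `K` (i.e. `S` is the range of an injective multiplicative map `K → L`). -/
theorem schreier_stmt18 {L : Type u} [MLoop L] (G : Set L) [Group G]
    (hGmul : ∀ a b : G, ((a * b : G) : L) = (a : L) * (b : L))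
    (hGone : ((1 : G) : L) = 1)
    (hnorm : IsNormalSubloop G)
    (hnuc : G ⊆ middleNucleus L ∩ rightNucleus L)
    {K : Type u} [MLoop K] :
    (∃ (D : SchreierData K G) (F : K × G → L),
        (∀ σ τ : K, D.f σ τ = 1) ∧
        Function.Bijective F ∧ (∀ p q : K × G, F (D.mul p q) = F p * F q) ∧
        ∀ t : G, F (1, t) = (t : L)) ↔
    (∃ S : Set L, (1 : L) ∈ S ∧
      (∀ x : L, ∃! s : L, s ∈ S ∧ ∃ g : G, s = x * (g : L)) ∧
      ∃ φ : K → L, Function.Injective φ ∧ (∀ a b : K, φ (a * b) = φ a * φ b) ∧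
        Set.range φ = S) := by
  have hr : ∀ (g : G) (x y : L), x * y * (g : L) = x * (y * (g : L)) :=
    fun g x y => (hnuc g.2).2 x y
  have hm : ∀ (g : G) (x y : L), x * (g : L) * y = x * ((g : L) * y) :=
    fun g x y => (hnuc g.2).1 x y
  have hcan : ∀ (g : G) (x : L), (x * (g : L)) * ((g⁻¹ : G) : L) = x := by
    intro g x
    rw [hr, ← hGmul, mul_inv_cancel, hGone, MLoop.mul_one]
  constructor
  · rintro ⟨D, F, hf, hFbij, hFmul, hF1⟩
    set φ : K → L := fun σ => F (σ, 1) with hφdef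
    have hFst : ∀ (σ : K) (t : G), F (σ, t) = φ σ * (t : L) := by
      intro σ t
      have h1 : D.mul (σ, (1 : G)) (1, t) = (σ, t) := by
        simp [SchreierData.mul, D.theta_one, D.f_one_right, MLoop.mul_one]
      calc F (σ, t) = F (D.mul (σ, 1) (1, t)) := by rw [h1]
        _ = F (σ, 1) * F (1, t) := hFmul _ _
        _ = φ σ * (t : L) := by rw [hF1]
    refine ⟨Set.range φ, ⟨1, ?_⟩, ?_, φ, ?_, ?_, rfl⟩
    · show F (1, (1 : G)) = 1
      rw [hF1, hGone]
    · intro x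
      obtain ⟨⟨σ, t⟩, rfl⟩ := hFbij.2 x
      refine ⟨φ σ, ⟨⟨σ, rfl⟩, t⁻¹, ?_⟩, ?_⟩
      · rw [hFst, hcan]
      · rintro s' ⟨⟨σ', rfl⟩, g, hg⟩
        have h2 : φ σ' = F (σ, t * g) := by
          rw [hFst σ, hr, ← hGmul, ← hFst] at hg
          exact hg
        have h3 : ((σ', (1 : G)) : K × G) = (σ, t * g) := hFbij.1 h2
        have h4 : σ' = σ := congrArg Prod.fst h3
        rw [h4]
    · intro a b h
      have := hFbij.1 (h : F (a, 1) = F (b, 1))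
      exact congrArg Prod.fst this
    · intro a b
      show F (a * b, 1) = F (a, 1) * F (b, 1)
      rw [← hFmul]
      congr 1
      simp [SchreierData.mul, hf]
  · rintro ⟨S, hS1, htrans, φ, hφinj, hφmul, rfl⟩
    obtain ⟨M, iM, fM, hfM0, hker⟩ := hnorm
    letI := iM
    have hfM : ∀ x y : L, fM (x * y) = fM x * fM y := hfM0
    have hmem : ∀ x : L, x ∈ G ↔ fM x = 1 := by
      intro x
      rw [hker]
      exact Iff.rfl
    have hφ1 : φ 1 = 1 := by
      have h := hφmul 1 1
      rw [MLoop.mul_one] at h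
      have h2 : φ 1 * φ 1 = φ 1 * 1 := by rw [MLoop.mul_one]; exact h.symm
      exact MLoop.left_cancel' h2
    -- membership of the ldiv / rdiv elements in G
    have hΘmem : ∀ (σ : K) (g : G), MLoop.ldiv (φ σ) ((g : L) * φ σ) ∈ G := by
      intro σ g
      rw [hmem]
      have e1 : fM (φ σ * MLoop.ldiv (φ σ) ((g : L) * φ σ)) = fM ((g : L) * φ σ) := by
        rw [MLoop.mul_ldiv']
      rw [hfM, hfM, (hmem _).1 g.2, MLoop.one_mul] at e1
      have e2 : fM (φ σ) * fM (MLoop.ldiv (φ σ) ((g : L) * φ σ)) = fM (φ σ) * 1 := by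
        rw [MLoop.mul_one]; exact e1
      exact MLoop.left_cancel' e2
    have hΘmem' : ∀ (σ : K) (g : G), MLoop.rdiv (φ σ * (g : L)) (φ σ) ∈ G := by
      intro σ g
      rw [hmem]
      have e1 : fM (MLoop.rdiv (φ σ * (g : L)) (φ σ) * φ σ) = fM (φ σ * (g : L)) := by
        rw [MLoop.rdiv_mul']
      rw [hfM, hfM, (hmem _).1 g.2, MLoop.mul_one] at e1
      have e2 : fM (MLoop.rdiv (φ σ * (g : L)) (φ σ)) * fM (φ σ) = 1 * fM (φ σ) := by
        rw [MLoop.one_mul]; exact e1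
      exact MLoop.right_cancel' e2
    set Θf : K → G → G := fun σ g => ⟨MLoop.ldiv (φ σ) ((g : L) * φ σ), hΘmem σ g⟩ with hΘfdef
    set Θi : K → G → G := fun σ g => ⟨MLoop.rdiv (φ σ * (g : L)) (φ σ), hΘmem' σ g⟩ with hΘidef
    have hΘspec : ∀ (σ : K) (g : G), φ σ * ((Θf σ g : G) : L) = (g : L) * φ σ :=
      fun σ g => MLoop.mul_ldiv' _ _
    have hΘispec : ∀ (σ : K) (g : G), ((Θi σ g : G) : L) * φ σ = φ σ * (g : L) :=
      fun σ g => MLoop.rdiv_mul' _ _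
    have hΘuniq : ∀ (σ : K) (g u : G), φ σ * (u : L) = (g : L) * φ σ → Θf σ g = u := by
      intro σ g u h
      apply Subtype.ext
      apply MLoop.left_cancel' (x := φ σ)
      rw [hΘspec, ← h]
    have hΘiuniq : ∀ (σ : K) (g u : G), (u : L) * φ σ = φ σ * (g : L) → Θi σ g = u := by
      intro σ g u h
      apply Subtype.ext
      apply MLoop.right_cancel' (x := φ σ)
      rw [hΘispec, ← h]
    have hli : ∀ (σ : K) (g : G), Θf σ (Θi σ g) = g :=
      fun σ g => hΘuniq σ _ g (hΘispec σ g).symm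
    have hri : ∀ (σ : K) (g : G), Θi σ (Θf σ g) = g :=
      fun σ g => hΘiuniq σ _ g (hΘspec σ g).symm
    have hΘmul : ∀ (σ : K) (g h : G), Θf σ (g * h) = Θf σ g * Θf σ h := by
      intro σ g h
      apply hΘuniq
      calc φ σ * ((Θf σ g * Θf σ h : G) : L)
          = φ σ * (((Θf σ g : G) : L) * ((Θf σ h : G) : L)) := by rw [hGmul]
        _ = φ σ * ((Θf σ g : G) : L) * ((Θf σ h : G) : L) := (hm (Θf σ g) _ _).symm
        _ = (g : L) * φ σ * ((Θf σ h : G) : L) := by rw [hΘspec]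
        _ = (g : L) * (φ σ * ((Θf σ h : G) : L)) := hr (Θf σ h) _ _
        _ = (g : L) * ((h : L) * φ σ) := by rw [hΘspec]
        _ = (g : L) * (h : L) * φ σ := (hm h _ _).symm
        _ = ((g * h : G) : L) * φ σ := by rw [hGmul]
    have hΘone : ∀ g : G, Θf 1 g = g := by
      intro g
      apply hΘuniq
      rw [hφ1, MLoop.one_mul, MLoop.mul_one]
    refine ⟨⟨fun σ => ⟨⟨Θf σ, Θi σ, hri σ, hli σ⟩, fun a b => hΘmul σ a b⟩, fun _ _ => 1,
        MulEquiv.ext hΘone, fun _ => rfl, fun _ => rfl⟩,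
      fun p => φ p.1 * ((p.2 : G) : L), fun _ _ => rfl, ⟨?_, ?_⟩, ?_, ?_⟩
    · rintro ⟨τ, t⟩ ⟨σ, s⟩ h
      simp only at h
      have h1 : φ τ = (φ σ * (s : L)) * ((t⁻¹ : G) : L) := by rw [← h, hcan]
      have h2 : φ σ = (φ σ * (s : L)) * ((s⁻¹ : G) : L) := (hcan s _).symm
      obtain ⟨w, hw, hwu⟩ := htrans (φ σ * (s : L))
      have e1 : φ τ = w := hwu (φ τ) ⟨⟨τ, rfl⟩, t⁻¹, h1⟩
      have e2 : φ σ = w := hwu (φ σ) ⟨⟨σ, rfl⟩, s⁻¹, h2⟩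
      have hτσ : τ = σ := hφinj (e1.trans e2.symm)
      subst hτσ
      have hts : (t : L) = (s : L) := MLoop.left_cancel' h
      exact Prod.ext rfl (Subtype.ext hts)
    · intro x
      obtain ⟨w, ⟨⟨σ, rfl⟩, g, hg⟩, _⟩ := htrans x
      refine ⟨(σ, g⁻¹), ?_⟩
      show φ σ * ((g⁻¹ : G) : L) = x
      rw [hg, hcan]
    · rintro ⟨τ, t⟩ ⟨σ, s⟩
      show φ (τ * σ) * (((1 : G) * Θf σ t * s : G) : L) = (φ τ * (t : L)) * (φ σ * (s : L))
      rw [one_mul, hφmul, hGmul]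
      calc φ τ * φ σ * (((Θf σ t : G) : L) * (s : L))
          = φ τ * φ σ * ((Θf σ t : G) : L) * (s : L) := (hr s _ _).symm
        _ = φ τ * (φ σ * ((Θf σ t : G) : L)) * (s : L) := by rw [hr (Θf σ t)]
        _ = φ τ * ((t : L) * φ σ) * (s : L) := by rw [hΘspec]
        _ = φ τ * (t : L) * φ σ * (s : L) := by rw [hm t]
        _ = (φ τ * (t : L)) * (φ σ * (s : L)) := hr s _ _
    · intro t
      show φ 1 * (t : L) = (t : L)
      rw [hφ1, MLoop.one_mul]
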